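/- Let m, n ∈ ℕ with m ≥ 2. For every convex continuous function f : [0,1] → ℝ and all x₁, …, x_m ∈ [0,1], one has ∑_{i₁,…,i_m=0}^n [b_{n,i₁}(x₁)⋯b_{n,i_m}(x₁) + ⋯ + b_{n,i₁}(x_m)⋯b_{n,i_m}(x_m) − m·b_{n,i₁}(x₁)⋯b_{n,i_m}(x_m)] · f((i₁+⋯+i_m)/(mn)) ≥ 0. -/

import Mathlib

open Polynomial Finset

/-- Bernstein basis polynomial `b_{n,k}(x) = C(n,k) x^k (1-x)^(n-k)`. -/
def bern (n k : ℕ) (x : ℝ) : ℝ := (n.choose k : ℝ) * x ^ k * (1 - x) ^ (n - k)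

noncomputable def Ee (g : ℕ → ℝ) : ℝ[X] →ₗ[ℝ] ℝ where
  toFun P := P.sum fun k a => a * g k
  map_add' P Q := Polynomial.sum_add_index P Q _ (by simp) (by intros; ring)
  map_smul' r P := by
    dsimp only [RingHom.id_apply]
    rw [Polynomial.sum_smul_index _ _ _ (by simp)]
    simp [Polynomial.sum, Finset.mul_sum, mul_assoc]

lemma Ee_apply (g : ℕ → ℝ) (P : ℝ[X]) : Ee g P = P.sum fun k a => a * g k := rfl

lemma Ee_monomial (g : ℕ → ℝ) (k : ℕ) (a : ℝ) : Ee g (monomial k a) = a * g k := by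
  rw [Ee_apply]
  exact Polynomial.sum_monomial_index a _ (by simp)

/-- second difference of g -/
def D2 (g : ℕ → ℝ) (k : ℕ) : ℝ := g (k + 2) - 2 * g (k + 1) + g k

lemma Ee_mul_sq (g : ℕ → ℝ) (Q : ℝ[X]) :
    Ee g (Q * (X - 1) ^ 2) = Ee (D2 g) Q := by
  induction Q using Polynomial.induction_on' with
  | add p q hp hq => rw [add_mul, map_add, map_add, hp, hq]
  | monomial k a =>
    have h1 : (monomial k a : ℝ[X]) * (X - 1) ^ 2
        = monomial (k+2) a + monomial k a - (monomial (k+1) a + monomial (k+1) a) := by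
      simp only [← C_mul_X_pow_eq_monomial]
      ring
    rw [h1, map_sub, map_add, map_add, Ee_monomial, Ee_monomial, Ee_monomial, Ee_monomial, D2]
    ring

lemma Ee_nonneg (h : ℕ → ℝ) (hh : ∀ k, 0 ≤ h k) (Q : ℝ[X]) (hQ : ∀ k, 0 ≤ Q.coeff k) :
    0 ≤ Ee h Q := by
  rw [Ee_apply]
  exact Finset.sum_nonneg fun k _ => mul_nonneg (hQ k) (hh k)

noncomputable def Ber (u : ℝ) : ℝ[X] := C (1 - u) + C u * X

lemma Ber_coeff_nonneg {u : ℝ} (hu : u ∈ Set.Icc (0:ℝ) 1) (k : ℕ) : 0 ≤ (Ber u).coeff k := by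
  obtain ⟨h0, h1⟩ := hu
  unfold Ber
  rw [coeff_add, coeff_C]
  rcases k with _ | k
  · simp; linarith
  · rw [show (C u * X : ℝ[X]) = monomial 1 u by rw [← C_mul_X_pow_eq_monomial]; ring,
      coeff_monomial]
    rcases k with _ | k <;> simp [h0]

lemma mul_coeff_nonneg {P Q : ℝ[X]} (hP : ∀ k, 0 ≤ P.coeff k) (hQ : ∀ k, 0 ≤ Q.coeff k) :
    ∀ k, 0 ≤ (P * Q).coeff k := by
  intro k
  rw [coeff_mul]
  exact Finset.sum_nonneg fun p _ => mul_nonneg (hP p.1) (hQ p.2)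

lemma pow_coeff_nonneg {P : ℝ[X]} (hP : ∀ k, 0 ≤ P.coeff k) (n : ℕ) :
    ∀ k, 0 ≤ (P ^ n).coeff k := by
  induction n with
  | zero => intro k; simp [coeff_one]; positivity
  | succ n ih => rw [pow_succ]; exact mul_coeff_nonneg ih hP

lemma step (g : ℕ → ℝ) (hg : ∀ k, 0 ≤ D2 g k) (Q : ℝ[X]) (hQ : ∀ k, 0 ≤ Q.coeff k)
    (x y : ℝ) :
    2 * Ee g (Q * Ber x * Ber y) ≤ Ee g (Q * Ber x * Ber x) + Ee g (Q * Ber y * Ber y) := by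
  have hid : Q * Ber x * Ber x + Q * Ber y * Ber y
      = (Q * Ber x * Ber y + Q * Ber x * Ber y) + ((x - y)^2) • (Q * (X - 1) ^ 2) := by
    rw [smul_eq_C_mul]
    simp only [Ber, map_sub, map_add, map_one, map_pow, map_mul]
    ring
  have h2 : Ee g (Q * Ber x * Ber x) + Ee g (Q * Ber y * Ber y)
      = 2 * Ee g (Q * Ber x * Ber y) + (x - y)^2 * Ee (D2 g) Q := by
    rw [← map_add, hid, map_add, map_add, map_smul, Ee_mul_sq, smul_eq_mul]
    ring
  have h3 : 0 ≤ (x - y)^2 * Ee (D2 g) Q :=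
    mul_nonneg (sq_nonneg _) (Ee_nonneg _ hg Q hQ)
  linarith

lemma convex1d (w : ℕ → ℝ) (s : ℕ)
    (h : ∀ j, j + 2 ≤ s → 2 * w (j+1) ≤ w j + w (j+2)) :
    ∀ c, c ≤ s → (s:ℝ) * w c ≤ ((s - c : ℕ):ℝ) * w 0 + (c:ℝ) * w s := by
  intro c hc
  set d : ℕ → ℝ := fun j => w (j+1) - w j with hd
  have mono : ∀ i j, i ≤ j → j + 1 ≤ s → d i ≤ d j := by
    intro i j hij
    induction j with
    | zero => intro _; interval_cases i; rfl
    | succ j ih =>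
      intro hjs
      rcases Nat.eq_or_lt_of_le hij with rfl | hlt
      · rfl
      · calc d i ≤ d j := ih (by omega) (by omega)
          _ ≤ d (j+1) := by have := h j (by omega); simp only [hd]; linarith
  rcases Nat.eq_or_lt_of_le hc with rfl | hlt
  · simp
  -- c < s
  have tel1 : ∑ j ∈ range c, d j = w c - w 0 := Finset.sum_range_sub w c
  have tel2 : ∑ j ∈ Ico c s, d j = w s - w c := by
    rw [Finset.sum_Ico_eq_sub _ hc, Finset.sum_range_sub w s, Finset.sum_range_sub w c]
    ring
  have hA : ∑ j ∈ range c, d j ≤ (c : ℝ) * d c := by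
    have := Finset.sum_le_card_nsmul (range c) d (d c)
      (fun j hj => mono j c (le_of_lt (mem_range.mp hj)) (by omega))
    simpa [nsmul_eq_mul] using this
  have hB : ((s - c : ℕ) : ℝ) * d c ≤ ∑ j ∈ Ico c s, d j := by
    have := Finset.card_nsmul_le_sum (Ico c s) d (d c)
      (fun j hj => mono c j (mem_Ico.mp hj).1 (by have := (mem_Ico.mp hj).2; omega))
    simpa [nsmul_eq_mul, Nat.card_Ico] using this
  have hsc : ((s - c : ℕ) : ℝ) = (s : ℝ) - c := by
    rw [Nat.cast_sub hc]
  have hc0 : (0:ℝ) ≤ (c:ℝ) := by positivity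
  have hsc0 : (0:ℝ) ≤ (s:ℝ) - c := by rw [← hsc]; positivity
  -- (s-c)*(w c - w 0) ≤ c*(w s - w c)
  have k1 : ((s:ℝ) - c) * (w c - w 0) ≤ ((s:ℝ) - c) * ((c:ℝ) * d c) := by
    apply mul_le_mul_of_nonneg_left _ hsc0
    rw [← tel1]; exact hA
  have k2 : (c:ℝ) * (((s:ℝ) - c) * d c) ≤ (c:ℝ) * (w s - w c) := by
    apply mul_le_mul_of_nonneg_left _ hc0
    rw [← tel2, ← hsc]; exact hB
  rw [hsc]
  nlinarith [k1, k2]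

lemma interp (g : ℕ → ℝ) (hg : ∀ k, 0 ≤ D2 g k) (Q : ℝ[X]) (hQ : ∀ k, 0 ≤ Q.coeff k)
    {x y : ℝ} (hx : x ∈ Set.Icc (0:ℝ) 1) (hy : y ∈ Set.Icc (0:ℝ) 1) (c d : ℕ) :
    ((c + d : ℕ):ℝ) * Ee g (Q * Ber x ^ c * Ber y ^ d)
      ≤ (d:ℝ) * Ee g (Q * Ber y ^ (c+d)) + (c:ℝ) * Ee g (Q * Ber x ^ (c+d)) := by
  set s := c + d with hs
  set w : ℕ → ℝ := fun j => Ee g (Q * Ber x ^ j * Ber y ^ (s - j)) with hw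
  have hconv : ∀ j, j + 2 ≤ s → 2 * w (j+1) ≤ w j + w (j+2) := by
    intro j hj
    set Q' : ℝ[X] := Q * Ber x ^ j * Ber y ^ (s - (j+2)) with hQ'def
    have hQ' : ∀ k, 0 ≤ Q'.coeff k :=
      mul_coeff_nonneg (mul_coeff_nonneg hQ (pow_coeff_nonneg (Ber_coeff_nonneg hx) j))
        (pow_coeff_nonneg (Ber_coeff_nonneg hy) _)
    have hst := step g hg Q' hQ' x y
    have e1 : Q' * Ber x * Ber y = Q * Ber x ^ (j+1) * Ber y ^ (s - (j+1)) := by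
      rw [hQ'def, show s - (j+1) = (s - (j+2)) + 1 by omega, pow_succ, pow_succ]
      ring
    have e2 : Q' * Ber x * Ber x = Q * Ber x ^ (j+2) * Ber y ^ (s - (j+2)) := by
      rw [hQ'def, show j + 2 = j + 1 + 1 by omega, pow_succ, pow_succ]
      ring
    have e3 : Q' * Ber y * Ber y = Q * Ber x ^ j * Ber y ^ (s - j) := by
      rw [hQ'def, show s - j = (s - (j+2)) + 1 + 1 by omega, pow_succ, pow_succ]
      ring
    rw [e1, e2, e3] at hst
    simp only [hw]
    linarith
  have hcs : c ≤ s := by omega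
  have hmain := convex1d w s hconv c hcs
  have w0 : w 0 = Ee g (Q * Ber y ^ s) := by
    simp only [hw, pow_zero, mul_one, Nat.sub_zero]
  have wc : w c = Ee g (Q * Ber x ^ c * Ber y ^ d) := by
    simp only [hw, show s - c = d by omega]
  have ws : w s = Ee g (Q * Ber x ^ s) := by
    simp only [hw, Nat.sub_self, pow_zero, mul_one]
  rw [w0, wc, ws, show s - c = d by omega] at hmain
  exact hmain

lemma prod_coeff_nonneg (T : List (ℝ × ℕ)) (hT : ∀ p ∈ T, p.1 ∈ Set.Icc (0:ℝ) 1) :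
    ∀ k, 0 ≤ ((T.map fun p => Ber p.1 ^ p.2).prod).coeff k := by
  induction T with
  | nil =>
    intro k
    simp only [List.map_nil, List.prod_nil, coeff_one]
    split <;> norm_num
  | cons p T ih =>
    intro k
    rw [List.map_cons, List.prod_cons]
    exact mul_coeff_nonneg
      (pow_coeff_nonneg (Ber_coeff_nonneg (hT p List.mem_cons_self)) _)
      (ih (fun q hq => hT q (List.mem_cons_of_mem _ hq))) k

lemma main_ineq (g : ℕ → ℝ) (hg : ∀ k, 0 ≤ D2 g k) (N : ℕ) :
    ∀ (L : List (ℝ × ℕ)), (∀ p ∈ L, p.1 ∈ Set.Icc (0:ℝ) 1) → (L.map Prod.snd).sum = N →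
    (N:ℝ) * Ee g ((L.map fun p => Ber p.1 ^ p.2).prod)
      ≤ (L.map fun p => (p.2:ℝ) * Ee g (Ber p.1 ^ N)).sum := by
  suffices H : ∀ len (L : List (ℝ × ℕ)), L.length ≤ len →
      (∀ p ∈ L, p.1 ∈ Set.Icc (0:ℝ) 1) → (L.map Prod.snd).sum = N →
      (N:ℝ) * Ee g ((L.map fun p => Ber p.1 ^ p.2).prod)
        ≤ (L.map fun p => (p.2:ℝ) * Ee g (Ber p.1 ^ N)).sum by
    exact fun L => H L.length L le_rfl
  intro len
  induction len with
  | zero =>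
    intro L hlen hmem hsum
    rw [List.length_eq_zero_iff.mp (Nat.le_zero.mp hlen)] at hsum ⊢
    simp at hsum
    simp [← hsum]
  | succ len IH =>
    intro L hlen hmem hsum
    rcases L with _ | ⟨⟨x, c⟩, L'⟩
    · simp at hsum; simp [← hsum]
    rcases L' with _ | ⟨⟨y, d⟩, T⟩
    · -- singleton
      simp only [List.map_cons, List.map_nil, List.sum_cons, List.sum_nil,
        List.prod_cons, List.prod_nil, add_zero, mul_one] at hsum ⊢
      rw [hsum]
    -- two or more
    have hx : x ∈ Set.Icc (0:ℝ) 1 := hmem (x, c) (by simp)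
    have hy : y ∈ Set.Icc (0:ℝ) 1 := hmem (y, d) (by simp)
    have hT : ∀ p ∈ T, p.1 ∈ Set.Icc (0:ℝ) 1 := fun p hp => hmem p (by simp [hp])
    set Q : ℝ[X] := (T.map fun p => Ber p.1 ^ p.2).prod with hQdef
    have hQ : ∀ k, 0 ≤ Q.coeff k := prod_coeff_nonneg T hT
    simp only [List.map_cons, List.sum_cons, List.prod_cons] at hsum ⊢
    rcases Nat.eq_zero_or_pos (c + d) with hs0 | hspos
    · obtain ⟨rfl, rfl⟩ : c = 0 ∧ d = 0 := by omega
      have := IH T (by simp at hlen; omega) hT (by simpa using hsum)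
      simpa using this
    · set s := c + d with hsdef
      have hint := interp g hg Q hQ hx hy c d
      have IHx := IH ((x, s) :: T) (by simp at hlen ⊢; omega)
        (by intro p hp; rcases List.mem_cons.mp hp with rfl | hp; exact hx; exact hT p hp)
        (by simp only [List.map_cons, List.sum_cons]; omega)
      have IHy := IH ((y, s) :: T) (by simp at hlen ⊢; omega)
        (by intro p hp; rcases List.mem_cons.mp hp with rfl | hp; exact hy; exact hT p hp)
        (by simp only [List.map_cons, List.sum_cons]; omega)
      simp only [List.map_cons, List.sum_cons, List.prod_cons] at IHx IHy
      have ex : Ber x ^ s * Q = Q * Ber x ^ s := by ring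
      have ey : Ber y ^ s * Q = Q * Ber y ^ s := by ring
      rw [ex] at IHx
      rw [ey] at IHy
      have e0 : Ber x ^ c * (Ber y ^ d * Q) = Q * Ber x ^ c * Ber y ^ d := by ring
      rw [e0]
      set E0 := Ee g (Q * Ber x ^ c * Ber y ^ d)
      set a := Ee g (Q * Ber y ^ s)
      set b := Ee g (Q * Ber x ^ s)
      set XX := Ee g (Ber x ^ N)
      set YY := Ee g (Ber y ^ N)
      set S := (T.map fun p => (p.2:ℝ) * Ee g (Ber p.1 ^ N)).sum
      have hcd : (c:ℝ) + (d:ℝ) = (s:ℝ) := by push_cast [hsdef]; ring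
      have h1 : (N:ℝ) * ((s:ℝ) * E0) ≤ (N:ℝ) * ((d:ℝ) * a + (c:ℝ) * b) := by
        apply mul_le_mul_of_nonneg_left _ (Nat.cast_nonneg N)
        have : ((c + d : ℕ):ℝ) = (s:ℝ) := by rw [hsdef]
        rw [this] at hint
        exact hint
      have h2 : (d:ℝ) * ((N:ℝ) * a) ≤ (d:ℝ) * ((s:ℝ) * YY + S) :=
        mul_le_mul_of_nonneg_left IHy (Nat.cast_nonneg d)
      have h3 : (c:ℝ) * ((N:ℝ) * b) ≤ (c:ℝ) * ((s:ℝ) * XX + S) :=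
        mul_le_mul_of_nonneg_left IHx (Nat.cast_nonneg c)
      have hfin : (s:ℝ) * ((N:ℝ) * E0) ≤ (s:ℝ) * ((c:ℝ) * XX + ((d:ℝ) * YY + S)) := by
        have hS : ((c:ℝ) + (d:ℝ)) * S = (s:ℝ) * S := by rw [hcd]
        linarith [h1, h2, h3, hS]
      have hsR : (0:ℝ) < (s:ℝ) := by exact_mod_cast hspos
      exact le_of_mul_le_mul_left hfin hsR

lemma Ber_pow (u : ℝ) (n : ℕ) :
    Ber u ^ n = ∑ k ∈ range (n+1), monomial k (bern n k u) := by
  have h : Ber u = C u * X + C (1 - u) := by rw [Ber]; ring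
  rw [h, add_pow]
  apply Finset.sum_congr rfl
  intro k hk
  rw [← C_mul_X_pow_eq_monomial, bern]
  simp only [map_mul, map_pow, map_sub, map_one, map_natCast]
  ring

lemma prod_monomial {ι : Type*} (s : Finset ι) (k : ι → ℕ) (a : ι → ℝ) :
    ∏ ν ∈ s, monomial (k ν) (a ν) = monomial (∑ ν ∈ s, k ν) (∏ ν ∈ s, a ν) := by
  induction s using Finset.cons_induction with
  | empty => simp
  | cons i s hi ih => rw [prod_cons, ih, sum_cons, prod_cons, monomial_mul_monomial]

lemma expand (g : ℕ → ℝ) {m n : ℕ} (y : Fin m → ℝ) :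
    Ee g (∏ ν, Ber (y ν) ^ n)
      = ∑ i : Fin m → Fin (n+1), (∏ ν, bern n (i ν) (y ν)) * g (∑ ν, (i ν : ℕ)) := by
  have h1 : ∀ ν, Ber (y ν) ^ n = ∑ k : Fin (n+1), monomial (k:ℕ) (bern n k (y ν)) := by
    intro ν
    rw [Ber_pow, ← Fin.sum_univ_eq_sum_range (fun k => monomial k (bern n k (y ν))) (n+1)]
  simp_rw [h1]
  rw [Finset.prod_univ_sum, Fintype.piFinset_univ, map_sum]
  apply Finset.sum_congr rfl
  intro i _
  rw [prod_monomial, Ee_monomial]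

noncomputable def gext (N : ℕ) (f : ℝ → ℝ) (k : ℕ) : ℝ :=
  if k ≤ N then f ((k:ℝ) / N) else f 1 + ((k:ℝ) - N) * (f 1 - f (((N - 1 : ℕ) : ℝ) / N))

lemma gext_D2 (N : ℕ) (hN : 1 ≤ N) (f : ℝ → ℝ) (hf : ConvexOn ℝ (Set.Icc 0 1) f) :
    ∀ k, 0 ≤ D2 (gext N f) k := by
  intro k
  have hN0 : (N:ℝ) ≠ 0 := by positivity
  have hNN : ((N:ℝ)) / N = 1 := div_self hN0
  unfold D2 gext
  by_cases h2 : k + 2 ≤ N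
  · rw [if_pos h2, if_pos (by omega : k + 1 ≤ N), if_pos (by omega : k ≤ N)]
    have ha : ((k:ℝ)) / N ∈ Set.Icc (0:ℝ) 1 := by
      constructor
      · positivity
      · rw [div_le_one (by positivity)]; exact_mod_cast by omega
    have hb : (((k:ℕ) + 2 : ℝ)) / N ∈ Set.Icc (0:ℝ) 1 := by
      constructor
      · positivity
      · rw [div_le_one (by positivity)]; exact_mod_cast h2
    have hmid := hf.2 ha hb (by norm_num : (0:ℝ) ≤ 1/2) (by norm_num : (0:ℝ) ≤ 1/2) (by norm_num)
    have heq : (1/2 : ℝ) • ((k:ℝ)/N) + (1/2 : ℝ) • (((k:ℝ)+2)/N) = ((k:ℝ)+1)/N := by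
      simp only [smul_eq_mul]
      ring
    rw [heq] at hmid
    simp only [smul_eq_mul] at hmid
    push_cast
    push_cast at hmid
    linarith
  · by_cases h1 : k + 1 ≤ N
    · have hkN : N = k + 1 := by omega
      rw [if_neg h2, if_pos h1, if_pos (by omega : k ≤ N)]
      have e1 : ((N:ℕ) - 1 : ℕ) = k := by omega
      have e2 : ((k:ℝ) + 1) / N = 1 := by rw [show ((k:ℝ) + 1) = (N:ℝ) by exact_mod_cast congrArg Nat.cast hkN.symm]; exact hNN
      rw [e1]
      push_cast
      rw [e2]
      push_cast
      have : ((k:ℝ) + 2) - N = 1 := by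
        have : (N:ℝ) = (k:ℝ) + 1 := by exact_mod_cast hkN
        linarith
      rw [this]
      ring_nf
      linarith [le_refl (0:ℝ)]
    · by_cases h0 : k ≤ N
      · have hkN : k = N := by omega
        rw [if_neg h2, if_neg h1, if_pos h0, hkN]
        rw [hNN]
        push_cast
        ring_nf
        linarith [le_refl (0:ℝ)]
      · rw [if_neg h2, if_neg h1, if_neg h0]
        push_cast
        ring_nf
        linarith [le_refl (0:ℝ)]

theorem stmt1 (m n : ℕ) (hm : 2 ≤ m) (x : Fin m → ℝ) (hx : ∀ ν, x ν ∈ Set.Icc (0:ℝ) 1)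
    (f : ℝ → ℝ) (hf : ConvexOn ℝ (Set.Icc 0 1) f) (hfc : ContinuousOn f (Set.Icc 0 1)) :
    0 ≤ ∑ i : Fin m → Fin (n+1),
      ((∑ k : Fin m, ∏ ν : Fin m, bern n (i ν) (x k))
          - (m : ℝ) * ∏ ν : Fin m, bern n (i ν) (x ν))
        * f (((∑ ν : Fin m, (i ν : ℕ) : ℕ) : ℝ) / (m * n)) := by
  set N := m * n with hN
  set g : ℕ → ℝ := gext N f with hg
  -- replace f(.../(m*n)) by g
  have hFg : ∀ i : Fin m → Fin (n+1),
      f (((∑ ν : Fin m, (i ν : ℕ) : ℕ) : ℝ) / (m * n)) = g (∑ ν : Fin m, (i ν : ℕ)) := by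
    intro i
    have hle : (∑ ν : Fin m, (i ν : ℕ)) ≤ N := by
      calc (∑ ν : Fin m, (i ν : ℕ)) ≤ ∑ _ν : Fin m, n :=
            Finset.sum_le_sum (fun ν _ => Nat.lt_succ_iff.mp (i ν).isLt)
        _ = m * n := by simp [Finset.sum_const, mul_comm]
    rw [hg, gext, if_pos hle]
    congr 1
    push_cast [hN]
    ring
  -- the key inequality
  have key : (m:ℝ) * Ee g (∏ ν, Ber (x ν) ^ n) ≤ ∑ k : Fin m, Ee g (Ber (x k) ^ N) := by
    rcases Nat.eq_zero_or_pos n with rfl | hn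
    · have hB : ∀ k : Fin m, (Ber (x k) : ℝ[X]) ^ N = 1 := by
        intro k; rw [hN, Nat.mul_zero, pow_zero]
      simp only [pow_zero, Finset.prod_const_one, hB, Finset.sum_const,
        Finset.card_univ, Fintype.card_fin, nsmul_eq_mul]
      exact le_refl _
    · have hN1 : 1 ≤ N := by rw [hN]; exact Nat.one_le_iff_ne_zero.mpr (by positivity)
      have hgD2 : ∀ k, 0 ≤ D2 g k := gext_D2 N hN1 f hf
      set L : List (ℝ × ℕ) := List.ofFn (fun ν : Fin m => (x ν, n)) with hL
      have hmem : ∀ p ∈ L, p.1 ∈ Set.Icc (0:ℝ) 1 := by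
        intro p hp
        rw [hL, List.mem_ofFn] at hp
        obtain ⟨ν, rfl⟩ := hp
        exact hx ν
      have hsum : (L.map Prod.snd).sum = N := by
        rw [hL, List.map_ofFn, List.sum_ofFn]
        simp [Function.comp, Finset.sum_const, Finset.card_univ, hN, mul_comm]
      have hmain := main_ineq g hgD2 N L hmem hsum
      rw [hL, List.map_ofFn, List.prod_ofFn, List.map_ofFn, List.sum_ofFn] at hmain
      simp only [Function.comp] at hmain
      have hcast : ((N:ℕ):ℝ) = (m:ℝ) * n := by rw [hN]; push_cast; ring
      rw [hcast] at hmain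
      have hsum2 : (∑ ν : Fin m, (n:ℝ) * Ee g (Ber (x ν) ^ N))
          = (n:ℝ) * ∑ k : Fin m, Ee g (Ber (x k) ^ N) := by
        rw [Finset.mul_sum]
      rw [hsum2] at hmain
      have hnR : (0:ℝ) < (n:ℝ) := by exact_mod_cast hn
      have : (n:ℝ) * ((m:ℝ) * Ee g (∏ ν, Ber (x ν) ^ n))
          ≤ (n:ℝ) * ∑ k : Fin m, Ee g (Ber (x k) ^ N) := by
        calc (n:ℝ) * ((m:ℝ) * Ee g (∏ ν, Ber (x ν) ^ n))
            = (m:ℝ) * (n:ℝ) * Ee g (∏ ν, Ber (x ν) ^ n) := by ring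
          _ ≤ _ := hmain
      exact le_of_mul_le_mul_left this hnR
  -- rewrite sums via expand
  have e1 : ∑ i : Fin m → Fin (n+1), (∏ ν, bern n (i ν) (x ν)) * g (∑ ν, (i ν : ℕ))
      = Ee g (∏ ν, Ber (x ν) ^ n) := (expand g x).symm
  have e2 : ∀ k : Fin m, ∑ i : Fin m → Fin (n+1),
      (∏ ν, bern n (i ν) (x k)) * g (∑ ν, (i ν : ℕ)) = Ee g (Ber (x k) ^ N) := by
    intro k
    rw [show (Ber (x k) ^ N : ℝ[X]) = ∏ _ν : Fin m, Ber (x k) ^ n from by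
      rw [Finset.prod_const, Finset.card_univ, Fintype.card_fin, ← pow_mul, hN, mul_comm]]
    exact (expand g (fun _ : Fin m => x k)).symm
  have final_id : (∑ i : Fin m → Fin (n+1),
      ((∑ k : Fin m, ∏ ν : Fin m, bern n (i ν) (x k))
          - (m : ℝ) * ∏ ν : Fin m, bern n (i ν) (x ν))
        * g (∑ ν : Fin m, (i ν : ℕ)))
      = (∑ k : Fin m, Ee g (Ber (x k) ^ N)) - (m:ℝ) * Ee g (∏ ν, Ber (x ν) ^ n) := by
    simp only [sub_mul, Finset.sum_mul, mul_assoc]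
    rw [Finset.sum_sub_distrib, Finset.sum_comm, ← Finset.mul_sum, e1]
    congr 1
    exact Finset.sum_congr rfl fun k _ => e2 k
  simp only [hFg]
  rw [final_id]
  linarith [key]
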